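/- For all N ∈ ℕ (N ≥ 1) and all t ∈ (0, 2π), the partial sum error satisfies N · |(π − t)/2 − Σ_{k=1}^{N} sin(kt)/k| ≤ 2N / ((2N+1) sin(t/2)); in particular, for fixed ε > 0 this is uniformly bounded by 1/sin(ε/2) for t ∈ [ε, 2π − ε]. -/

import Mathlib

open Real Finset

noncomputable def saw (N : ℕ) (s : ℝ) : ℝ :=
  (Real.pi - s)/2 - ∑ k ∈ Finset.Icc 1 N, Real.sin (k*s)/k

noncomputable def FF (N : ℕ) (s : ℝ) : ℝ :=
  saw N s - Real.cos ((2*N+1)*(s/2)) / ((2*N+1) * Real.sin (s/2))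

noncomputable def ph (N : ℕ) (s : ℝ) : ℝ := ((2*(N:ℝ)+1) * Real.sin (s/2))⁻¹

lemma dirichlet (N : ℕ) (s : ℝ) :
    2 * Real.sin (s/2) * (1/2 + ∑ k ∈ Finset.Icc 1 N, Real.cos (k*s))
      = Real.sin ((2*N+1)*(s/2)) := by
  induction N with
  | zero => simp; ring_nf
  | succ n ih =>
    rw [Finset.sum_Icc_succ_top (by omega : 1 ≤ n + 1)]
    have h := Real.sin_sub_sin ((2*(n+1:ℝ)+1)*(s/2)) ((2*(n:ℝ)+1)*(s/2))
    have e1 : ((2*(n+1:ℝ)+1)*(s/2) - (2*(n:ℝ)+1)*(s/2))/2 = s/2 := by ring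
    have e2 : ((2*(n+1:ℝ)+1)*(s/2) + (2*(n:ℝ)+1)*(s/2))/2 = ((n:ℝ)+1)*s := by ring
    rw [e1, e2] at h
    push_cast
    push_cast at ih
    linarith [h, ih]

lemma sin_half_pos {s : ℝ} (hs : s ∈ Set.Ioo 0 (2*Real.pi)) : 0 < Real.sin (s/2) :=
  Real.sin_pos_of_pos_of_lt_pi (by linarith [hs.1]) (by linarith [hs.2])

lemma hasDerivAt_half (s : ℝ) :
    HasDerivAt (fun u : ℝ => Real.sin (u/2)) (Real.cos (s/2) / 2) s := by
  refine ((Real.hasDerivAt_sin (s/2)).comp s ((hasDerivAt_id s).div_const 2)).congr_deriv ?_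
  ring

lemma hasDerivAt_saw (N : ℕ) (s : ℝ) :
    HasDerivAt (saw N) (-(1/2) - ∑ k ∈ Finset.Icc 1 N, Real.cos (k*s)) s := by
  have h1 : HasDerivAt (fun u : ℝ => (Real.pi - u)/2) (-(1/2)) s := by
    have := ((hasDerivAt_const s Real.pi).sub (hasDerivAt_id s)).div_const 2
    refine this.congr_deriv ?_
    norm_num
  have h2 : HasDerivAt (fun u : ℝ => ∑ k ∈ Finset.Icc 1 N, Real.sin (k*u)/k)
      (∑ k ∈ Finset.Icc 1 N, Real.cos (k*s)) s := by
    apply HasDerivAt.fun_sum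
    intro k hk
    have hk0 : (k:ℝ) ≠ 0 := Nat.cast_ne_zero.2 (by have := (Finset.mem_Icc.1 hk).1; omega)
    have h := ((Real.hasDerivAt_sin ((k:ℝ)*s)).comp s
      ((hasDerivAt_id s).const_mul (k:ℝ))).div_const (k:ℝ)
    refine h.congr_deriv ?_
    field_simp
  exact h1.sub h2

lemma hasDerivAt_FF (N : ℕ) {s : ℝ} (hs : s ∈ Set.Ioo 0 (2*Real.pi)) :
    HasDerivAt (FF N)
      (Real.cos ((2*N+1)*(s/2)) * Real.cos (s/2) / (2*(2*N+1)*Real.sin (s/2)^2)) s := by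
  have hsin := sin_half_pos hs
  have hC : (0:ℝ) < 2*N+1 := by positivity
  have hden : (2*(N:ℝ)+1) * Real.sin (s/2) ≠ 0 := by positivity
  have h3 : HasDerivAt (fun u : ℝ => Real.cos ((2*N+1)*(u/2)))
      (-Real.sin ((2*N+1)*(s/2)) * ((2*N+1)/2)) s := by
    have hin : HasDerivAt (fun u : ℝ => (2*(N:ℝ)+1)*(u/2)) ((2*(N:ℝ)+1)/2) s := by
      exact (((hasDerivAt_id s).div_const 2).const_mul (2*(N:ℝ)+1)).congr_deriv (by ring)
    exact (Real.hasDerivAt_cos ((2*(N:ℝ)+1)*(s/2))).comp s hin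
  have h4 : HasDerivAt (fun u : ℝ => (2*(N:ℝ)+1) * Real.sin (u/2))
      ((2*(N:ℝ)+1) * (Real.cos (s/2)/2)) s := (hasDerivAt_half s).const_mul _
  have hdiv := h3.div h4 hden
  have h := (hasDerivAt_saw N s).sub hdiv
  have hFF : FF N = fun u => saw N u - Real.cos ((2*N+1)*(u/2)) / ((2*N+1) * Real.sin (u/2)) := rfl
  rw [hFF]
  refine h.congr_deriv ?_
  have hd := dirichlet N s
  have hs0 : Real.sin (s/2) ≠ 0 := ne_of_gt hsin
  have hsum : (∑ k ∈ Finset.Icc 1 N, Real.cos (k*s))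
      = Real.sin ((2*N+1)*(s/2))/(2*Real.sin (s/2)) - 1/2 := by
    rw [eq_sub_iff_add_eq, eq_div_iff (by positivity)]
    linear_combination hd
  rw [hsum]
  field_simp
  ring

lemma hasDerivAt_ph (N : ℕ) {s : ℝ} (hs : s ∈ Set.Ioo 0 (2*Real.pi)) :
    HasDerivAt (ph N) (-(Real.cos (s/2) / (2*(2*N+1)*Real.sin (s/2)^2))) s := by
  have hsin := sin_half_pos hs
  have hden : (2*(N:ℝ)+1) * Real.sin (s/2) ≠ 0 := by positivity
  have h4 : HasDerivAt (fun u : ℝ => (2*(N:ℝ)+1) * Real.sin (u/2))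
      ((2*(N:ℝ)+1) * (Real.cos (s/2)/2)) s := (hasDerivAt_half s).const_mul _
  have := h4.inv hden
  refine this.congr_deriv ?_
  have hs0 : Real.sin (s/2) ≠ 0 := ne_of_gt hsin
  field_simp

lemma FF_pi (N : ℕ) : FF N Real.pi = 0 := by
  have h1 : saw N Real.pi = 0 := by
    have : ∀ k ∈ Finset.Icc 1 N, Real.sin (k*Real.pi)/k = 0 := by
      intro k _; rw [Real.sin_nat_mul_pi]; simp
    simp [saw, Finset.sum_congr rfl this]
  have h2 : Real.cos ((2*(N:ℝ)+1)*(Real.pi/2)) = 0 := by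
    rw [show (2*(N:ℝ)+1)*(Real.pi/2) = N*Real.pi + Real.pi/2 by ring, Real.cos_add,
      Real.cos_pi_div_two, Real.sin_nat_mul_pi]
    ring
  simp [FF, h1, h2]

lemma ph_pi (N : ℕ) : ph N Real.pi = (2*(N:ℝ)+1)⁻¹ := by
  simp [ph, Real.sin_pi_div_two]

lemma abs_FF_le (N : ℕ) {t : ℝ} (ht : t ∈ Set.Ioo 0 (2*Real.pi)) :
    |FF N t| ≤ ph N t := by
  have hpi := Real.pi_pos
  have hC : (0:ℝ) < 2*N+1 := by positivity
  rcases le_total t Real.pi with hle | hle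
  · -- work on [t, π]
    have hsub : Set.Icc t Real.pi ⊆ Set.Ioo 0 (2*Real.pi) := fun s hs =>
      ⟨lt_of_lt_of_le ht.1 hs.1, lt_of_le_of_lt hs.2 (by linarith)⟩
    have hsub' : Set.Ioo t Real.pi ⊆ Set.Ioo 0 (2*Real.pi) := fun s hs =>
      hsub ⟨le_of_lt hs.1, le_of_lt hs.2⟩
    have hcos : ∀ s ∈ Set.Ioo t Real.pi, 0 ≤ Real.cos (s/2) := fun s hs =>
      Real.cos_nonneg_of_mem_Icc ⟨by linarith [ht.1, hs.1], by linarith [hs.2]⟩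
    -- G1 = FF - ph monotone
    have hmono : MonotoneOn (fun s => FF N s - ph N s) (Set.Icc t Real.pi) := by
      apply monotoneOn_of_deriv_nonneg (convex_Icc _ _)
      · exact fun s hs => ((hasDerivAt_FF N (hsub hs)).sub (hasDerivAt_ph N (hsub hs))).continuousAt.continuousWithinAt
      · intro s hs
        rw [interior_Icc] at hs
        exact ((hasDerivAt_FF N (hsub' hs)).sub (hasDerivAt_ph N (hsub' hs))).differentiableAt.differentiableWithinAt
      · intro s hs
        rw [interior_Icc] at hs
        have hsin := sin_half_pos (hsub' hs)
        rw [show (fun s => FF N s - ph N s) = FF N - ph N from rfl, ((hasDerivAt_FF N (hsub' hs)).sub (hasDerivAt_ph N (hsub' hs))).deriv]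
        have : Real.cos ((2*N+1)*(s/2)) * Real.cos (s/2) / (2*(2*N+1)*Real.sin (s/2)^2)
            - -(Real.cos (s/2) / (2*(2*N+1)*Real.sin (s/2)^2))
            = (Real.cos ((2*N+1)*(s/2)) + 1) * Real.cos (s/2) / (2*(2*N+1)*Real.sin (s/2)^2) := by
          ring
        rw [this]
        apply div_nonneg
        · exact mul_nonneg (by linarith [Real.neg_one_le_cos ((2*(N:ℝ)+1)*(s/2))]) (hcos s hs)
        · positivity
    have hanti : AntitoneOn (fun s => FF N s + ph N s) (Set.Icc t Real.pi) := by
      apply antitoneOn_of_deriv_nonpos (convex_Icc _ _)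
      · exact fun s hs => ((hasDerivAt_FF N (hsub hs)).add (hasDerivAt_ph N (hsub hs))).continuousAt.continuousWithinAt
      · intro s hs
        rw [interior_Icc] at hs
        exact ((hasDerivAt_FF N (hsub' hs)).add (hasDerivAt_ph N (hsub' hs))).differentiableAt.differentiableWithinAt
      · intro s hs
        rw [interior_Icc] at hs
        have hsin := sin_half_pos (hsub' hs)
        rw [show (fun s => FF N s + ph N s) = FF N + ph N from rfl, ((hasDerivAt_FF N (hsub' hs)).add (hasDerivAt_ph N (hsub' hs))).deriv]
        have : Real.cos ((2*N+1)*(s/2)) * Real.cos (s/2) / (2*(2*N+1)*Real.sin (s/2)^2)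
            + -(Real.cos (s/2) / (2*(2*N+1)*Real.sin (s/2)^2))
            = (Real.cos ((2*N+1)*(s/2)) - 1) * Real.cos (s/2) / (2*(2*N+1)*Real.sin (s/2)^2) := by
          ring
        rw [this]
        apply div_nonpos_of_nonpos_of_nonneg
        · exact mul_nonpos_of_nonpos_of_nonneg (by linarith [Real.cos_le_one ((2*(N:ℝ)+1)*(s/2))]) (hcos s hs)
        · positivity
    have htm : t ∈ Set.Icc t Real.pi := ⟨le_refl _, hle⟩
    have hpm : Real.pi ∈ Set.Icc t Real.pi := ⟨hle, le_refl _⟩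
    have h1 := hmono htm hpm hle
    have h2 := hanti htm hpm hle
    simp only at h1 h2
    rw [FF_pi, ph_pi] at h1 h2
    have : (0:ℝ) ≤ (2*(N:ℝ)+1)⁻¹ := by positivity
    rw [abs_le]
    constructor <;> linarith
  · -- work on [π, t]
    have hsub : Set.Icc Real.pi t ⊆ Set.Ioo 0 (2*Real.pi) := fun s hs =>
      ⟨lt_of_lt_of_le hpi hs.1, lt_of_le_of_lt hs.2 ht.2⟩
    have hsub' : Set.Ioo Real.pi t ⊆ Set.Ioo 0 (2*Real.pi) := fun s hs =>
      hsub ⟨le_of_lt hs.1, le_of_lt hs.2⟩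
    have hcos : ∀ s ∈ Set.Ioo Real.pi t, Real.cos (s/2) ≤ 0 := fun s hs =>
      Real.cos_nonpos_of_pi_div_two_le_of_le (by linarith [hs.1]) (by linarith [ht.2, hs.2])
    have hanti : AntitoneOn (fun s => FF N s - ph N s) (Set.Icc Real.pi t) := by
      apply antitoneOn_of_deriv_nonpos (convex_Icc _ _)
      · exact fun s hs => ((hasDerivAt_FF N (hsub hs)).sub (hasDerivAt_ph N (hsub hs))).continuousAt.continuousWithinAt
      · intro s hs
        rw [interior_Icc] at hs
        exact ((hasDerivAt_FF N (hsub' hs)).sub (hasDerivAt_ph N (hsub' hs))).differentiableAt.differentiableWithinAt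
      · intro s hs
        rw [interior_Icc] at hs
        have hsin := sin_half_pos (hsub' hs)
        rw [show (fun s => FF N s - ph N s) = FF N - ph N from rfl, ((hasDerivAt_FF N (hsub' hs)).sub (hasDerivAt_ph N (hsub' hs))).deriv]
        have : Real.cos ((2*N+1)*(s/2)) * Real.cos (s/2) / (2*(2*N+1)*Real.sin (s/2)^2)
            - -(Real.cos (s/2) / (2*(2*N+1)*Real.sin (s/2)^2))
            = (Real.cos ((2*N+1)*(s/2)) + 1) * Real.cos (s/2) / (2*(2*N+1)*Real.sin (s/2)^2) := by
          ring
        rw [this]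
        apply div_nonpos_of_nonpos_of_nonneg
        · exact mul_nonpos_of_nonneg_of_nonpos (by linarith [Real.neg_one_le_cos ((2*(N:ℝ)+1)*(s/2))]) (hcos s hs)
        · positivity
    have hmono : MonotoneOn (fun s => FF N s + ph N s) (Set.Icc Real.pi t) := by
      apply monotoneOn_of_deriv_nonneg (convex_Icc _ _)
      · exact fun s hs => ((hasDerivAt_FF N (hsub hs)).add (hasDerivAt_ph N (hsub hs))).continuousAt.continuousWithinAt
      · intro s hs
        rw [interior_Icc] at hs
        exact ((hasDerivAt_FF N (hsub' hs)).add (hasDerivAt_ph N (hsub' hs))).differentiableAt.differentiableWithinAt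
      · intro s hs
        rw [interior_Icc] at hs
        have hsin := sin_half_pos (hsub' hs)
        rw [show (fun s => FF N s + ph N s) = FF N + ph N from rfl, ((hasDerivAt_FF N (hsub' hs)).add (hasDerivAt_ph N (hsub' hs))).deriv]
        have : Real.cos ((2*N+1)*(s/2)) * Real.cos (s/2) / (2*(2*N+1)*Real.sin (s/2)^2)
            + -(Real.cos (s/2) / (2*(2*N+1)*Real.sin (s/2)^2))
            = (Real.cos ((2*N+1)*(s/2)) - 1) * Real.cos (s/2) / (2*(2*N+1)*Real.sin (s/2)^2) := by
          ring
        rw [this]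
        apply div_nonneg
        · nlinarith [Real.cos_le_one ((2*(N:ℝ)+1)*(s/2)), hcos s hs]
        · positivity
    have htm : t ∈ Set.Icc Real.pi t := ⟨hle, le_refl _⟩
    have hpm : Real.pi ∈ Set.Icc Real.pi t := ⟨le_refl _, hle⟩
    have h1 := hanti hpm htm hle
    have h2 := hmono hpm htm hle
    simp only at h1 h2
    rw [FF_pi, ph_pi] at h1 h2
    have : (0:ℝ) ≤ (2*(N:ℝ)+1)⁻¹ := by positivity
    rw [abs_le]
    constructor <;> linarith

lemma key (N : ℕ) {t : ℝ} (ht : t ∈ Set.Ioo 0 (2*Real.pi)) :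
    |(Real.pi - t) / 2 - ∑ k ∈ Finset.Icc 1 N, Real.sin (k * t) / k| ≤ 2 * ph N t := by
  have h1 := abs_FF_le N ht
  have hsin := sin_half_pos ht
  have hphpos : 0 ≤ ph N t := by rw [ph]; positivity
  have hsaw : (Real.pi - t) / 2 - ∑ k ∈ Finset.Icc 1 N, Real.sin (k * t) / k
      = FF N t + Real.cos ((2*N+1)*(t/2)) * ph N t := by
    rw [FF, ph, saw, div_eq_mul_inv]
    ring
  rw [hsaw]
  calc |FF N t + Real.cos ((2*N+1)*(t/2)) * ph N t|
      ≤ |FF N t| + |Real.cos ((2*N+1)*(t/2)) * ph N t| := abs_add_le _ _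
    _ ≤ ph N t + 1 * ph N t := by
        have h2 : |Real.cos ((2*N+1)*(t/2)) * ph N t| ≤ 1 * ph N t := by
          rw [abs_mul, abs_of_nonneg hphpos]
          exact mul_le_mul_of_nonneg_right (Real.abs_cos_le_one _) hphpos
        linarith
    _ = 2 * ph N t := by ring

lemma sin_half_mono {ε t : ℝ} (hε : 0 < ε) (h1 : ε ≤ t) (h2 : t ≤ 2*Real.pi - ε) :
    Real.sin (ε/2) ≤ Real.sin (t/2) := by
  have hpi := Real.pi_pos
  have hπ : ε ≤ Real.pi := by linarith
  rcases le_total (t/2) (Real.pi/2) with h | h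
  · exact Real.strictMonoOn_sin.monotoneOn ⟨by linarith, by linarith⟩ ⟨by linarith, h⟩ (by linarith)
  · rw [← Real.sin_pi_sub (t/2)]
    exact Real.strictMonoOn_sin.monotoneOn ⟨by linarith, by linarith⟩ ⟨by linarith, by linarith⟩
      (by linarith)

/-- For `N ≥ 1` and `t ∈ (0, 2π)`,
`N · |(π − t)/2 − Σ_{k=1}^N sin(kt)/k| ≤ 2N/((2N+1) sin(t/2))`; in particular,
for fixed `ε > 0` this is uniformly bounded by `1/sin(ε/2)` on `[ε, 2π − ε]`. -/
theorem sawtooth_partial_sum_bound :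
    (∀ N : ℕ, 1 ≤ N → ∀ t : ℝ, t ∈ Set.Ioo 0 (2 * Real.pi) →
      (N : ℝ) * |(Real.pi - t) / 2 - ∑ k ∈ Finset.Icc 1 N, Real.sin (k * t) / k| ≤
        2 * N / ((2 * N + 1) * Real.sin (t / 2))) ∧
    (∀ ε : ℝ, 0 < ε → ∀ N : ℕ, 1 ≤ N →
      ∀ t : ℝ, t ∈ Set.Icc ε (2 * Real.pi - ε) →
        (N : ℝ) * |(Real.pi - t) / 2 - ∑ k ∈ Finset.Icc 1 N, Real.sin (k * t) / k| ≤
          1 / Real.sin (ε / 2)) := by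
  have part1 : ∀ N : ℕ, 1 ≤ N → ∀ t : ℝ, t ∈ Set.Ioo 0 (2 * Real.pi) →
      (N : ℝ) * |(Real.pi - t) / 2 - ∑ k ∈ Finset.Icc 1 N, Real.sin (k * t) / k| ≤
        2 * N / ((2 * N + 1) * Real.sin (t / 2)) := by
    intro N hN t ht
    have hkey := key N ht
    have hNpos : (0:ℝ) ≤ N := Nat.cast_nonneg N
    have hsin := sin_half_pos ht
    calc (N : ℝ) * |(Real.pi - t) / 2 - ∑ k ∈ Finset.Icc 1 N, Real.sin (k * t) / k|
        ≤ (N : ℝ) * (2 * ph N t) := mul_le_mul_of_nonneg_left hkey hNpos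
      _ = 2 * N / ((2 * N + 1) * Real.sin (t / 2)) := by
          rw [ph, div_eq_mul_inv]; ring
  refine ⟨part1, ?_⟩
  intro ε hε N hN t ht
  have hpi := Real.pi_pos
  have hεπ : ε ≤ Real.pi := by
    have := ht.1; have := ht.2; linarith
  have ht' : t ∈ Set.Ioo 0 (2 * Real.pi) := ⟨by linarith [ht.1], by linarith [ht.2]⟩
  have hse : 0 < Real.sin (ε/2) :=
    Real.sin_pos_of_pos_of_lt_pi (by linarith) (by linarith)
  have hst := sin_half_mono hε ht.1 ht.2
  have hsin := sin_half_pos ht'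
  refine le_trans (part1 N hN t ht') ?_
  rw [div_le_div_iff₀ (by positivity) hse]
  have hNpos : (0:ℝ) ≤ N := Nat.cast_nonneg N
  nlinarith [mul_le_mul_of_nonneg_left hst (by positivity : (0:ℝ) ≤ 2*(N:ℝ))]
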